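/- If A ∈ ℝ^{n×n} is a non-singular tridiagonal matrix and X = A⁻¹, then for every 1 ≤ k ≤ n, both submatrices U(k) = {x_{s,j} : 1 ≤ s ≤ k, k ≤ j ≤ n} (the rows 1..k and columns k..n of X) and L(k) = {x_{s,j} : k ≤ s ≤ n, 1 ≤ j ≤ k} (the rows k..n and columns 1..k of X) have rank not greater than 1. -/

import Mathlib

open Matrix Finset

/-- Truncate a sum over `Fin n` to a sum over `Fin j` when the tail vanishes. -/
lemma sum_fin_trunc {n j : ℕ} (hj : j ≤ n) (f : Fin n → ℝ)
    (hf : ∀ m : Fin n, j ≤ (m : ℕ) → f m = 0) :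
    ∑ m : Fin n, f m = ∑ m : Fin j, f ⟨(m : ℕ), lt_of_lt_of_le m.2 hj⟩ := by
  set e : Fin j ↪ Fin n := ⟨fun m => ⟨(m : ℕ), lt_of_lt_of_le m.2 hj⟩,
    fun a b h => by simpa [Fin.ext_iff] using h⟩ with he
  have hmap : ∑ x ∈ Finset.univ.map e, f x = ∑ m : Fin j, f ⟨(m : ℕ), lt_of_lt_of_le m.2 hj⟩ :=
    Finset.sum_map Finset.univ e f
  rw [← hmap]
  refine (Finset.sum_subset (Finset.subset_univ _) ?_).symm
  intro x _ hx
  apply hf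
  by_contra hlt
  push_neg at hlt
  exact hx (Finset.mem_map.2 ⟨⟨(x : ℕ), hlt⟩, Finset.mem_univ _, Fin.ext rfl⟩)

/-- If `T` is a `k × (k+1)` matrix with linearly independent rows and `T * U = 0`,
then `U` has rank at most one. -/
lemma rank_le_one_of_mul_eq_zero {k m : ℕ} (T : Matrix (Fin k) (Fin (k + 1)) ℝ)
    (U : Matrix (Fin (k + 1)) (Fin m) ℝ)
    (hT : LinearIndependent ℝ (fun i : Fin k => T i)) (h : T * U = 0) :
    U.rank ≤ 1 := by
  have hrange : LinearMap.range U.mulVecLin ≤ LinearMap.ker T.mulVecLin := by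
    rintro x ⟨y, rfl⟩
    simp only [LinearMap.mem_ker, mulVecLin_apply, Matrix.mulVec_mulVec, h, Matrix.zero_mulVec]
  have hTrank : T.rank = k := by
    rw [← Matrix.rank_transpose, Matrix.rank, Matrix.range_mulVecLin, Matrix.col, Matrix.transpose_transpose,
      finrank_span_eq_card hT, Fintype.card_fin]
  have h1 := LinearMap.finrank_range_add_finrank_ker T.mulVecLin
  rw [Module.finrank_pi] at h1
  have hker : Module.finrank ℝ (LinearMap.ker T.mulVecLin) = 1 := by
    have : Module.finrank ℝ (LinearMap.range T.mulVecLin) = k := hTrank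
    simp [Fintype.card_fin] at h1
    omega
  calc U.rank ≤ Module.finrank ℝ (LinearMap.ker T.mulVecLin) :=
        Submodule.finrank_mono hrange
    _ = 1 := hker

/-- if `A` is a non-singular tridiagonal matrix and `X = A⁻¹`, then for
every `k`, the submatrix `U(k)` of `X` consisting of rows `1..k` and columns `k..n`
(here 0-based: rows `0..k` and columns `k..n-1`) and the submatrix `L(k)` consisting
of rows `k..n` and columns `1..k` both have rank at most 1. -/
theorem inverse_tridiagonal_triangle_blocks_rank_le_one {n : ℕ}
    (A : Matrix (Fin n) (Fin n) ℝ)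
    (htri : ∀ i j : Fin n, ((i : ℕ) + 1 < (j : ℕ) ∨ (j : ℕ) + 1 < (i : ℕ)) → A i j = 0)
    (hdet : IsUnit A.det) :
    ∀ k : ℕ, (hk : k < n) →
      (Matrix.of fun (s : Fin (k + 1)) (j : Fin (n - k)) =>
        A⁻¹ ⟨(s : ℕ), by omega⟩ ⟨k + (j : ℕ), by omega⟩).rank ≤ 1 ∧
      (Matrix.of fun (s : Fin (n - k)) (j : Fin (k + 1)) =>
        A⁻¹ ⟨k + (s : ℕ), by omega⟩ ⟨(j : ℕ), by omega⟩).rank ≤ 1 := by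
  intro k hk
  have hk1 : k + 1 ≤ n := hk
  have hkn : k ≤ n := le_of_lt hk
  have hAX : A * A⁻¹ = 1 := Matrix.mul_nonsing_inv A hdet
  have hXA : A⁻¹ * A = 1 := Matrix.nonsing_inv_mul A hdet
  -- the k × (k+1) top-left "rows" matrix and (k+1) × k "columns" matrix of A
  set T : Matrix (Fin k) (Fin (k + 1)) ℝ :=
    fun i m => A ⟨(i : ℕ), by omega⟩ ⟨(m : ℕ), by omega⟩ with hT
  set S : Matrix (Fin (k + 1)) (Fin k) ℝ :=
    fun m j => A ⟨(m : ℕ), by omega⟩ ⟨(j : ℕ), by omega⟩ with hS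
  -- rows of T are linearly independent
  have hTind : LinearIndependent ℝ (fun i : Fin k => T i) := by
    rw [Fintype.linearIndependent_iff]
    intro g hg
    set c : Fin n → ℝ := fun i => if h : (i : ℕ) < k then g ⟨(i : ℕ), h⟩ else 0 with hc
    have hcA : c ᵥ* A = 0 := by
      funext m
      show ∑ i : Fin n, c i * A i m = 0
      rw [sum_fin_trunc hkn (fun i => c i * A i m) (by
        intro i hi
        show c i * A i m = 0
        have : c i = 0 := dif_neg (by omega)
        rw [this, zero_mul])]
      by_cases hm : (m : ℕ) < k + 1
      · have h0 := congrFun hg ⟨(m : ℕ), hm⟩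
        rw [Finset.sum_apply] at h0
        simp only [Pi.smul_apply, smul_eq_mul, Pi.zero_apply] at h0
        rw [← h0]
        refine Finset.sum_congr rfl fun i _ => ?_
        have hci : c ⟨(i : ℕ), by omega⟩ = g i := by
          rw [hc]; simp
        rw [hci]
      · refine Finset.sum_eq_zero fun i _ => ?_
        have : A ⟨(i : ℕ), by omega⟩ m = 0 := htri _ _ (Or.inl (by simp; omega))
        rw [this, mul_zero]
    have hc0 : c = 0 := by
      have h2 : c ᵥ* A ᵥ* A⁻¹ = c := by
        rw [Matrix.vecMul_vecMul, hAX, Matrix.vecMul_one]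
      rw [hcA, Matrix.zero_vecMul] at h2
      exact h2.symm
    intro i
    have : c ⟨(i : ℕ), by omega⟩ = g i := by rw [hc]; simp
    rw [← this, hc0]; rfl
  -- columns of S are linearly independent
  have hSind : LinearIndependent ℝ (fun j : Fin k => Sᵀ j) := by
    rw [Fintype.linearIndependent_iff]
    intro g hg
    set c : Fin n → ℝ := fun j => if h : (j : ℕ) < k then g ⟨(j : ℕ), h⟩ else 0 with hc
    have hcA : A *ᵥ c = 0 := by
      funext m
      show ∑ j : Fin n, A m j * c j = 0
      rw [sum_fin_trunc hkn (fun j => A m j * c j) (by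
        intro j hj
        show A m j * c j = 0
        have : c j = 0 := dif_neg (by omega)
        rw [this, mul_zero])]
      by_cases hm : (m : ℕ) < k + 1
      · have h0 := congrFun hg ⟨(m : ℕ), hm⟩
        rw [Finset.sum_apply] at h0
        simp only [Pi.smul_apply, smul_eq_mul, Pi.zero_apply] at h0
        rw [← h0]
        refine Finset.sum_congr rfl fun j _ => ?_
        have hcj : c ⟨(j : ℕ), by omega⟩ = g j := by
          rw [hc]; simp
        rw [hcj, mul_comm]
        rfl
      · refine Finset.sum_eq_zero fun j _ => ?_
        have : A m ⟨(j : ℕ), by omega⟩ = 0 := htri _ _ (Or.inr (by simp; omega))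
        rw [this, zero_mul]
    have hc0 : c = 0 := by
      have h2 : A⁻¹ *ᵥ (A *ᵥ c) = c := by
        rw [Matrix.mulVec_mulVec, hXA, Matrix.one_mulVec]
      rw [hcA, Matrix.mulVec_zero] at h2
      exact h2.symm
    intro j
    have : c ⟨(j : ℕ), by omega⟩ = g j := by rw [hc]; simp
    rw [← this, hc0]; rfl
  constructor
  · set U : Matrix (Fin (k + 1)) (Fin (n - k)) ℝ :=
      Matrix.of fun (s : Fin (k + 1)) (j : Fin (n - k)) =>
        A⁻¹ ⟨(s : ℕ), by omega⟩ ⟨k + (j : ℕ), by omega⟩ with hU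
    have hTU : T * U = 0 := by
      ext i j
      rw [Matrix.mul_apply, Matrix.zero_apply]
      have hsum := sum_fin_trunc hk1
        (fun m : Fin n => A ⟨(i : ℕ), by omega⟩ m * A⁻¹ m ⟨k + (j : ℕ), by omega⟩) (by
          intro m hm
          show A ⟨(i : ℕ), by omega⟩ m * A⁻¹ m ⟨k + (j : ℕ), by omega⟩ = 0
          have : A ⟨(i : ℕ), by omega⟩ m = 0 := htri _ _ (Or.inl (by simp; omega))
          rw [this, zero_mul])
      have hfull : ∑ m : Fin n,
          A ⟨(i : ℕ), by omega⟩ m * A⁻¹ m ⟨k + (j : ℕ), by omega⟩ = 0 := by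
        have := congrFun (congrFun hAX ⟨(i : ℕ), by omega⟩) ⟨k + (j : ℕ), by omega⟩
        rw [Matrix.mul_apply] at this
        rw [this, Matrix.one_apply_ne (by simp; omega)]
      rw [hfull] at hsum
      exact hsum.symm
    exact rank_le_one_of_mul_eq_zero T U hTind hTU
  · set L : Matrix (Fin (n - k)) (Fin (k + 1)) ℝ :=
      Matrix.of fun (s : Fin (n - k)) (j : Fin (k + 1)) =>
        A⁻¹ ⟨k + (s : ℕ), by omega⟩ ⟨(j : ℕ), by omega⟩ with hL
    have hLS : L * S = 0 := by
      ext s j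
      rw [Matrix.mul_apply, Matrix.zero_apply]
      have hsum := sum_fin_trunc hk1
        (fun m : Fin n => A⁻¹ ⟨k + (s : ℕ), by omega⟩ m * A m ⟨(j : ℕ), by omega⟩) (by
          intro m hm
          show A⁻¹ ⟨k + (s : ℕ), by omega⟩ m * A m ⟨(j : ℕ), by omega⟩ = 0
          have : A m ⟨(j : ℕ), by omega⟩ = 0 := htri _ _ (Or.inr (by simp; omega))
          rw [this, mul_zero])
      have hfull : ∑ m : Fin n,
          A⁻¹ ⟨k + (s : ℕ), by omega⟩ m * A m ⟨(j : ℕ), by omega⟩ = 0 := by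
        have := congrFun (congrFun hXA ⟨k + (s : ℕ), by omega⟩) ⟨(j : ℕ), by omega⟩
        rw [Matrix.mul_apply] at this
        rw [this, Matrix.one_apply_ne (by simp; omega)]
      rw [hfull] at hsum
      exact hsum.symm
    have hST : Sᵀ * Lᵀ = 0 := by
      rw [← Matrix.transpose_mul, hLS, Matrix.transpose_zero]
    have := rank_le_one_of_mul_eq_zero Sᵀ Lᵀ hSind hST
    rwa [Matrix.rank_transpose] at this
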